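/- arXiv:2112.02676 — 2 statements merged into one kernel-verified Lean document; each statement's English description precedes it below -/
import Mathlib

section
/- Let d ≥ 1, γ > 1, γ' = γ/(γ−1), C_H > 0, and let H : ℝ^d → ℝ be convex and differentiable with C_H^{-1}|p|^γ − C_H ≤ H(p) ≤ C_H(|p|^γ + 1) for all p ∈ ℝ^d. Then there exists a constant C_L > 0, depending only on C_H and γ, such that ⟨∇H(p), p⟩ − H(p) ≥ C_L^{-1}|∇H(p)|^{γ'} − C_L for all p ∈ ℝ^d. -/
open scoped RealInnerProductSpace

noncomputable section

/-- `ℝ^d` as a Euclidean space. -/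
abbrev Euc (d : ℕ) := EuclideanSpace ℝ (Fin d)

/-- The growth condition `C_H⁻¹ |p|^γ - C_H ≤ H(p) ≤ C_H(|p|^γ + 1)` on all of `ℝ^d`. -/
def GrowthFull {d : ℕ} (CH γ : ℝ) (H : Euc d → ℝ) : Prop :=
  ∀ p : Euc d, CH⁻¹ * ‖p‖ ^ γ - CH ≤ H p ∧ H p ≤ CH * (‖p‖ ^ γ + 1)

/-- Subgradient inequality for a differentiable convex function. -/
lemma my_subgrad {d : ℕ} {H : Euc d → ℝ} (hc : ConvexOn ℝ Set.univ H)
    (hdiff : Differentiable ℝ H) (p r : Euc d) :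
    ⟪gradient H p, r - p⟫ ≤ H r - H p := by
  set g : ℝ → ℝ := fun s => H (p + s • (r - p)) with hgdef
  have hgc : ConvexOn ℝ Set.univ g := by
    have h := hc.comp_affineMap (AffineMap.lineMap p r)
    have heq : (H ∘ (AffineMap.lineMap p r : ℝ →ᵃ[ℝ] Euc d)) = g := by
      funext s
      simp [hgdef, AffineMap.lineMap_apply]
      congr 1
      abel
    rw [heq] at h
    simpa using h
  have hline : HasDerivAt (fun s : ℝ => p + s • (r - p)) (r - p) 0 := by
    simpa using ((hasDerivAt_id (0 : ℝ)).smul_const (r - p)).const_add p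
  have hF : HasFDerivAt H (InnerProductSpace.toDual ℝ (Euc d) (gradient H p))
      ((fun s : ℝ => p + s • (r - p)) 0) := by
    simpa using (hdiff p).hasGradientAt.hasFDerivAt
  have hg0 : HasDerivAt g ⟪gradient H p, r - p⟫ 0 := by
    have := hF.comp_hasDerivAt 0 hline
    exact this
  have hslope := hgc.le_slope_of_hasDerivAt (Set.mem_univ (0:ℝ)) (Set.mem_univ (1:ℝ))
    one_pos hg0
  have : slope g 0 1 = H r - H p := by
    simp [slope, hgdef]
  linarith [hslope.trans_eq this]

/-- coercivity of the Lagrangian along `ν = ∇H(p)`. -/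
theorem lagrangian_coercivity
    (d : ℕ) (γ CH : ℝ) (hd : 1 ≤ d) (hγ : 1 < γ) (hCH : 0 < CH) :
    ∃ CL : ℝ, 0 < CL ∧ ∀ H : Euc d → ℝ,
      ConvexOn ℝ Set.univ H → Differentiable ℝ H → GrowthFull CH γ H →
      ∀ p : Euc d,
        CL⁻¹ * ‖gradient H p‖ ^ (γ / (γ - 1)) - CL
          ≤ ⟪gradient H p, p⟫ - H p := by
  have hγ0 : (0:ℝ) < γ := by linarith
  have hγ1 : (0:ℝ) < γ - 1 := by linarith
  set b : ℝ := γ * CH with hbdef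
  have hb0 : 0 < b := by positivity
  set t : ℝ := (γ - 1)⁻¹ with htdef
  have ht0 : 0 < t := by positivity
  set c : ℝ := b ^ (-t) * (1 - γ⁻¹) with hcdef
  have hγinv : γ⁻¹ < 1 := by
    rw [inv_lt_one_iff₀]; right; exact hγ
  have hc0 : 0 < c := by
    apply mul_pos (Real.rpow_pos_of_pos hb0 _)
    linarith
  refine ⟨max c⁻¹ CH, lt_of_lt_of_le (by positivity) (le_max_left _ _), ?_⟩
  intro H hconv hdiff hgr p
  set CL : ℝ := max c⁻¹ CH with hCLdef
  have hCL0 : 0 < CL := lt_of_lt_of_le hCH (le_max_right _ _)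
  have hCLinv : CL⁻¹ ≤ c := by
    rw [inv_le_comm₀ hCL0 hc0]
    exact le_max_left _ _
  have hCHle : CH ≤ CL := le_max_right _ _
  set q : Euc d := gradient H p with hqdef
  have hγ'ne : γ / (γ - 1) ≠ 0 := by positivity
  by_cases hq : q = 0
  · -- gradient is zero: use r = 0
    have hsub := my_subgrad hconv hdiff p 0
    rw [← hqdef, hq] at hsub
    simp only [inner_zero_left] at hsub
    have hH0 : H 0 ≤ CH * (‖(0 : Euc d)‖ ^ γ + 1) := (hgr 0).2
    rw [norm_zero, Real.zero_rpow (ne_of_gt hγ0)] at hH0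
    rw [hq]
    simp only [norm_zero, inner_zero_left, Real.zero_rpow hγ'ne]
    nlinarith
  · have ha0 : 0 < ‖q‖ := norm_pos_iff.mpr hq
    set a : ℝ := ‖q‖ with hadef
    set lam : ℝ := (a / b) ^ t with hlamdef
    have hlam0 : 0 < lam := Real.rpow_pos_of_pos (by positivity) _
    set r : Euc d := (lam / a) • q with hrdef
    have hsub := my_subgrad hconv hdiff p r
    rw [← hqdef] at hsub
    have hqr : ⟪q, r⟫ = lam * a := by
      rw [hrdef, real_inner_smul_right, real_inner_self_eq_norm_sq, ← hadef]
      field_simp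
    have hnr : ‖r‖ = lam := by
      rw [hrdef, norm_smul, ← hadef, Real.norm_eq_abs, abs_of_pos (by positivity)]
      field_simp
    have hHr : H r ≤ CH * (lam ^ γ + 1) := by
      have := (hgr r).2
      rwa [hnr] at this
    -- key algebra: lam * a - CH * lam ^ γ = c * a ^ (γ / (γ - 1))
    have hlam_eq : lam = a ^ t * b ^ (-t) := by
      rw [hlamdef, Real.div_rpow ha0.le hb0.le, Real.rpow_neg hb0.le, div_eq_mul_inv]
    have hgamma' : t + 1 = γ / (γ - 1) := by
      rw [htdef]; field_simp; ring
    have htγ : t * γ = γ / (γ - 1) := by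
      rw [htdef, div_eq_mul_inv, mul_comm]
    have h1 : lam * a = a ^ (γ / (γ - 1)) * b ^ (-t) := by
      rw [hlam_eq, ← hgamma', Real.rpow_add ha0, Real.rpow_one]; ring
    have h2 : lam ^ γ = a ^ (γ / (γ - 1)) * b ^ (-(t * γ)) := by
      rw [hlam_eq, Real.mul_rpow (Real.rpow_nonneg ha0.le _) (Real.rpow_nonneg hb0.le _),
        ← Real.rpow_mul ha0.le, ← Real.rpow_mul hb0.le, neg_mul, htγ]
    have h3 : b ^ (-(t * γ)) = b ^ (-t) * b⁻¹ := by
      have : -(t * γ) = -t + (-1) := by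
        have : t * γ = t + 1 := by rw [htγ, ← hgamma']
        linarith
      rw [this, Real.rpow_add hb0, Real.rpow_neg_one]
    have h4 : CH * b⁻¹ = γ⁻¹ := by
      rw [hbdef]; field_simp
    have hkey : lam * a - CH * lam ^ γ = c * a ^ (γ / (γ - 1)) := by
      rw [h1, h2, h3, hcdef]
      have : CH * (a ^ (γ / (γ - 1)) * (b ^ (-t) * b⁻¹))
          = a ^ (γ / (γ - 1)) * b ^ (-t) * γ⁻¹ := by
        rw [← h4]; ring
      rw [this]; ring
    have hpow : CL⁻¹ * a ^ (γ / (γ - 1)) ≤ c * a ^ (γ / (γ - 1)) := by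
      apply mul_le_mul_of_nonneg_right hCLinv (Real.rpow_nonneg ha0.le _)
    have hsub' : lam * a - ⟪q, p⟫ ≤ H r - H p := by
      rw [inner_sub_right, hqr] at hsub; exact hsub
    linarith
end
end

section
/- Let d ≥ 1, γ > 1, C_H > 0, and let H : ℝ^d → ℝ be convex and differentiable with C_H^{-1}|p|^γ − C_H ≤ H(p) ≤ C_H(|p|^γ + 1) for all p ∈ ℝ^d. Then there exists a constant C̃ > 0, depending only on C_H and γ, such that |∇H(p)| ≤ C̃(|p|^{γ−1} + 1) for all p ∈ ℝ^d. -/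
open scoped RealInnerProductSpace

noncomputable section

/-- Supporting hyperplane inequality for a convex differentiable function. -/
lemma convex_support_ineq {d : ℕ} {H : Euc d → ℝ}
    (hc : ConvexOn ℝ Set.univ H) (hdiff : Differentiable ℝ H) (p v : Euc d) :
    H p + ⟪gradient H p, v⟫ ≤ H (p + v) := by
  set g : ℝ → ℝ := fun t => H (p + t • v) with hg
  have hgc : ConvexOn ℝ Set.univ g := by
    have h := hc.comp_affineMap (AffineMap.lineMap p (p + v) : ℝ →ᵃ[ℝ] Euc d)
    have heq : g = H ∘ (AffineMap.lineMap p (p + v) : ℝ →ᵃ[ℝ] Euc d) := by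
      funext t
      simp [g, AffineMap.lineMap_apply, vsub_eq_sub, vadd_eq_add,
        add_sub_cancel_left, add_comm]
    rw [heq]
    simpa using h
  have hder : HasDerivAt g ⟪gradient H p, v⟫ 0 := by
    have h1 : HasFDerivAt H ((InnerProductSpace.toDual ℝ (Euc d)) (gradient H p)) p :=
      (hdiff p).hasGradientAt.hasFDerivAt
    have h2 : HasDerivAt (fun t : ℝ => p + t • v) v 0 := by
      simpa using ((hasDerivAt_id (0 : ℝ)).smul_const v).const_add p
    have h1' : HasFDerivAt H ((InnerProductSpace.toDual ℝ (Euc d)) (gradient H p))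
        (p + (0 : ℝ) • v) := by simpa using h1
    have := h1'.comp_hasDerivAt 0 h2
    simpa [g, InnerProductSpace.toDual_apply_apply, Function.comp_def] using this
  have hslope : ⟪gradient H p, v⟫ ≤ slope g 0 1 :=
    hgc.le_slope_of_hasDerivAt (Set.mem_univ 0) (Set.mem_univ 1) one_pos hder
  have hse : slope g 0 1 = g 1 - g 0 := by simp [slope_def_field]
  rw [hse] at hslope
  have hg0 : g 0 = H p := by simp [g]
  have hg1 : g 1 = H (p + v) := by simp [g]
  rw [hg0, hg1] at hslope
  linarith

set_option maxHeartbeats 1000000 in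
/-- gradient growth bound `|∇H(p)| ≤ C̃ (|p|^{γ-1} + 1)`. -/
theorem gradient_growth_bound
    (d : ℕ) (γ CH : ℝ) (hd : 1 ≤ d) (hγ : 1 < γ) (hCH : 0 < CH) :
    ∃ Ctil : ℝ, 0 < Ctil ∧ ∀ H : Euc d → ℝ,
      ConvexOn ℝ Set.univ H → Differentiable ℝ H → GrowthFull CH γ H →
      ∀ p : Euc d, ‖gradient H p‖ ≤ Ctil * (‖p‖ ^ (γ - 1) + 1) := by
  refine ⟨CH * 2 ^ (2 * γ) + 2 * CH, by positivity, ?_⟩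
  intro H hc hdiff hgrow p
  set g := gradient H p with hgdef
  have hA : (0:ℝ) ≤ ‖p‖ ^ (γ - 1) := Real.rpow_nonneg (norm_nonneg p) _
  by_cases hg0 : g = 0
  · rw [hg0]
    simp only [norm_zero]
    positivity
  set r : ℝ := ‖p‖ + 1 with hr
  have hrpos : 0 < r := by positivity
  have hr1 : 1 ≤ r := by rw [hr]; linarith [norm_nonneg p]
  have hgnorm : 0 < ‖g‖ := norm_pos_iff.mpr hg0
  set v : Euc d := (r / ‖g‖) • g with hv
  have hinner : ⟪g, v⟫ = r * ‖g‖ := by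
    rw [hv, real_inner_smul_right, real_inner_self_eq_norm_sq]
    field_simp
  have hkey := convex_support_ineq hc hdiff p v
  rw [hinner] at hkey
  have hnv : ‖v‖ = r := by
    rw [hv, norm_smul, Real.norm_eq_abs, abs_of_pos (by positivity)]
    field_simp
  have hub := (hgrow (p + v)).2
  have hlb := (hgrow p).1
  have hpv : ‖p + v‖ ≤ 2 * r := by
    calc ‖p + v‖ ≤ ‖p‖ + ‖v‖ := norm_add_le _ _
      _ ≤ 2 * r := by rw [hnv]; rw [hr]; linarith
  have hγ0 : (0:ℝ) ≤ γ := by linarith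
  have hpow : ‖p + v‖ ^ γ ≤ (2 * r) ^ γ :=
    Real.rpow_le_rpow (norm_nonneg _) hpv hγ0
  have hlb' : -CH ≤ H p := by
    have : (0:ℝ) ≤ CH⁻¹ * ‖p‖ ^ γ := by positivity
    linarith
  have h2r : (2 * r) ^ γ = 2 ^ γ * r ^ γ := Real.mul_rpow (by norm_num) (le_of_lt hrpos)
  have hub2 : H (p + v) ≤ CH * (2 ^ γ * r ^ γ + 1) := by
    calc H (p + v) ≤ CH * (‖p + v‖ ^ γ + 1) := hub
      _ ≤ CH * ((2 * r) ^ γ + 1) :=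
          mul_le_mul_of_nonneg_left (add_le_add_left hpow 1) hCH.le
      _ = CH * (2 ^ γ * r ^ γ + 1) := by rw [h2r]
  have hmain : r * ‖g‖ ≤ CH * 2 ^ γ * r ^ γ + 2 * CH := by
    have h := hub2
    rw [mul_add, mul_one, ← mul_assoc] at h
    linarith [hkey, hlb']
  -- divide by r
  have hrg : r ^ γ = r ^ (γ - 1) * r := by
    rw [← Real.rpow_add_one (ne_of_gt hrpos)]; ring_nf
  have h2CHr : 2 * CH ≤ 2 * CH * r := le_mul_of_one_le_right (by positivity) hr1
  have hdiv : ‖g‖ ≤ CH * 2 ^ γ * r ^ (γ - 1) + 2 * CH := by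
    have h1 : r * ‖g‖ ≤ r * (CH * 2 ^ γ * r ^ (γ - 1) + 2 * CH) := by
      have he : r * (CH * 2 ^ γ * r ^ (γ - 1) + 2 * CH)
          = CH * 2 ^ γ * r ^ γ + 2 * CH * r := by rw [hrg]; ring
      rw [he]
      linarith [hmain, h2CHr]
    exact le_of_mul_le_mul_left h1 hrpos
  -- bound r^(γ-1)
  have hγ1 : (0:ℝ) ≤ γ - 1 := by linarith
  have hrbound : r ^ (γ - 1) ≤ 2 ^ (γ - 1) * (‖p‖ ^ (γ - 1) + 1) := by
    have hmax : r ≤ 2 * max ‖p‖ 1 := by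
      rcases le_total ‖p‖ 1 with h | h
      · rw [max_eq_right h, hr]; linarith
      · rw [max_eq_left h, hr]; linarith
    have h1 : r ^ (γ - 1) ≤ (2 * max ‖p‖ 1) ^ (γ - 1) :=
      Real.rpow_le_rpow hrpos.le hmax hγ1
    have hmaxpos : (0:ℝ) < max ‖p‖ 1 := lt_max_of_lt_right one_pos
    have h2 : (2 * max ‖p‖ 1) ^ (γ - 1) = 2 ^ (γ - 1) * (max ‖p‖ 1) ^ (γ - 1) :=
      Real.mul_rpow (by norm_num) hmaxpos.le
    have h3 : (max ‖p‖ 1) ^ (γ - 1) ≤ ‖p‖ ^ (γ - 1) + 1 := by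
      rcases le_total ‖p‖ 1 with h | h
      · rw [max_eq_right h, Real.one_rpow]; linarith
      · rw [max_eq_left h]; linarith
    have h2pos : (0:ℝ) < (2:ℝ) ^ (γ - 1) := Real.rpow_pos_of_pos two_pos _
    calc r ^ (γ - 1) ≤ 2 ^ (γ - 1) * (max ‖p‖ 1) ^ (γ - 1) := by rw [← h2]; exact h1
      _ ≤ 2 ^ (γ - 1) * (‖p‖ ^ (γ - 1) + 1) :=
          mul_le_mul_of_nonneg_left h3 h2pos.le
  -- combine
  have h2g : (2:ℝ) ^ γ * 2 ^ (γ - 1) ≤ 2 ^ (2 * γ) := by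
    rw [← Real.rpow_add two_pos]
    apply (Real.rpow_le_rpow_left_iff one_lt_two).mpr
    linarith
  set A : ℝ := ‖p‖ ^ (γ - 1) + 1 with hAdef
  have hA1 : 1 ≤ A := by rw [hAdef]; linarith
  have hA0 : 0 ≤ A := by linarith
  have step1 : CH * 2 ^ γ * r ^ (γ - 1) ≤ CH * 2 ^ γ * (2 ^ (γ - 1) * A) :=
    mul_le_mul_of_nonneg_left hrbound (by positivity)
  have step2 : CH * 2 ^ γ * (2 ^ (γ - 1) * A) ≤ CH * 2 ^ (2 * γ) * A := by
    have he : CH * 2 ^ γ * (2 ^ (γ - 1) * A) = CH * (2 ^ γ * 2 ^ (γ - 1)) * A := by ring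
    rw [he]
    exact mul_le_mul_of_nonneg_right (mul_le_mul_of_nonneg_left h2g hCH.le) hA0
  have step3 : 2 * CH ≤ 2 * CH * A := le_mul_of_one_le_right (by positivity) hA1
  have hfinal : ‖g‖ ≤ CH * 2 ^ (2 * γ) * A + 2 * CH * A := by
    linarith [hdiv, step1, step2, step3]
  calc ‖g‖ ≤ CH * 2 ^ (2 * γ) * A + 2 * CH * A := hfinal
    _ = (CH * 2 ^ (2 * γ) + 2 * CH) * A := by ring
end
end
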